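/- arXiv:2601.00603 — 3 statements merged into one kernel-verified Lean document; each statement's English description precedes it below -/
import Mathlib

section
/- Let Y, W be integrable real random variables, D a {0,1}-valued random variable with P(D=1) > 0, and let h*, q* be measurable functions with q*(Z)·1_{D=0}·(Y - h*(W)) integrable. Define τ_dr = E[ (D/E[D] − q*(Z)(1-D)/E[D]) (Y − h*(W)) ]. Suppose the outcome bridge model is correct in the sense that E[1_{D=0}(Y − h*(W)) | Z] = 0 almost surely. Then τ_dr = E[ Y − h*(W) | D = 1 ]. -/
open MeasureTheory ProbabilityTheory

/-- first half of Proposition 1 (double robustness under a correctly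
specified outcome bridge h*): if E[1_{D=0}(Y − h*(W)) | Z] = 0 a.s., then
τ_dr = E[(D/E[D] − q*(Z)(1−D)/E[D])(Y − h*(W))] equals E[Y − h*(W) | D=1]. -/
theorem stmt4 {Ω γ : Type*} [MeasurableSpace Ω] [mγ : MeasurableSpace γ]
    {μ : Measure Ω} [IsProbabilityMeasure μ]
    (Y W D : Ω → ℝ) (Z : Ω → γ) (hstar : ℝ → ℝ) (qstar : γ → ℝ)
    (hY : Integrable Y μ) (hW : Integrable W μ)
    (hD01 : ∀ ω, D ω = 0 ∨ D ω = 1)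
    (hDpos : 0 < μ {ω | D ω = 1})
    (hmY : Measurable Y) (hmW : Measurable W) (hmD : Measurable D)
    (hmZ : Measurable Z) (hmh : Measurable hstar) (hmq : Measurable qstar)
    (hhW : Integrable (fun ω => hstar (W ω)) μ)
    (hint : Integrable
      (fun ω => qstar (Z ω) * (if D ω = 0 then (1:ℝ) else 0) * (Y ω - hstar (W ω))) μ)
    -- correct outcome bridge model: E[1_{D=0}(Y − h*(W)) | Z] = 0 a.s.
    (hbridge : μ[(fun ω => (if D ω = 0 then (1:ℝ) else 0) * (Y ω - hstar (W ω))) |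
        mγ.comap Z] =ᵐ[μ] 0) :
    ∫ ω, (D ω / (∫ ω', D ω' ∂μ)
          - qstar (Z ω) * (1 - D ω) / (∫ ω', D ω' ∂μ)) * (Y ω - hstar (W ω)) ∂μ
      = (∫ ω, D ω * (Y ω - hstar (W ω)) ∂μ) / (∫ ω', D ω' ∂μ) := by
  set c := ∫ ω', D ω' ∂μ with hc
  have hmle := hmZ.comap_le
  set m : MeasurableSpace Ω := mγ.comap Z with hm
  have hZm : Measurable[m] Z := fun s hs => ⟨s, hs, rfl⟩
  -- indicator function
  have hind : ∀ ω, (1 - D ω) = (if D ω = 0 then (1:ℝ) else 0) := by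
    intro ω
    rcases hD01 ω with h | h <;> simp [h]
  have hYh : Integrable (fun ω => Y ω - hstar (W ω)) μ := hY.sub hhW
  -- integrability of D * (Y - h(W))
  have hint1 : Integrable (fun ω => D ω * (Y ω - hstar (W ω))) μ := by
    apply hYh.bdd_mul (hmD.aestronglyMeasurable)
    refine (Filter.Eventually.of_forall (fun ω => ?_) : ∀ᵐ ω ∂μ, ‖D ω‖ ≤ 1)
    rcases hD01 ω with h | h <;> simp [h]
  -- integrability of ind * (Y - h(W))
  have hintg : Integrable (fun ω => (if D ω = 0 then (1:ℝ) else 0) * (Y ω - hstar (W ω))) μ := by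
    apply hYh.bdd_mul
    · exact (Measurable.ite (hmD (measurableSet_singleton 0)) measurable_const
        measurable_const).aestronglyMeasurable
    · refine (Filter.Eventually.of_forall (fun ω => ?_) :
        ∀ᵐ ω ∂μ, ‖(if D ω = 0 then (1:ℝ) else 0)‖ ≤ 1)
      by_cases h : D ω = 0 <;> simp [h]
  have hintq : Integrable
      (fun ω => qstar (Z ω) * ((if D ω = 0 then (1:ℝ) else 0) * (Y ω - hstar (W ω)))) μ := by
    refine hint.congr (Filter.Eventually.of_forall fun ω => ?_)
    ring
  -- second term vanishes
  have hzero : ∫ ω, qstar (Z ω) * ((if D ω = 0 then (1:ℝ) else 0) * (Y ω - hstar (W ω))) ∂μ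
      = 0 := by
    have hsm : StronglyMeasurable[m] (fun ω => qstar (Z ω)) :=
      (hmq.comp hZm).stronglyMeasurable
    have hmul := condExp_mul_of_stronglyMeasurable_left hsm hintq hintg
    have h0 : (μ[(fun ω => qstar (Z ω) * ((if D ω = 0 then (1:ℝ) else 0) *
        (Y ω - hstar (W ω)))) | m]) =ᵐ[μ] 0 := by
      refine hmul.trans ?_
      filter_upwards [hbridge] with ω hω
      simp only [Pi.mul_apply, Pi.zero_apply] at hω ⊢
      rw [hω, mul_zero]
    have hic := integral_condExp (μ := μ) (f := fun ω => qstar (Z ω) *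
        ((if D ω = 0 then (1:ℝ) else 0) * (Y ω - hstar (W ω)))) hmle
    rw [← hic, integral_congr_ae h0]
    simp
  -- main computation
  have hptwise : ∀ ω, (D ω / c - qstar (Z ω) * (1 - D ω) / c) * (Y ω - hstar (W ω))
      = D ω * (Y ω - hstar (W ω)) / c
        - (qstar (Z ω) * ((if D ω = 0 then (1:ℝ) else 0) * (Y ω - hstar (W ω)))) / c := by
    intro ω
    rw [hind ω]
    ring
  calc ∫ ω, (D ω / c - qstar (Z ω) * (1 - D ω) / c) * (Y ω - hstar (W ω)) ∂μ
      = ∫ ω, (D ω * (Y ω - hstar (W ω)) / c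
          - (qstar (Z ω) * ((if D ω = 0 then (1:ℝ) else 0) * (Y ω - hstar (W ω)))) / c) ∂μ := by
        exact integral_congr_ae (Filter.Eventually.of_forall hptwise)
    _ = (∫ ω, D ω * (Y ω - hstar (W ω)) ∂μ) / c
          - (∫ ω, qstar (Z ω) * ((if D ω = 0 then (1:ℝ) else 0) * (Y ω - hstar (W ω))) ∂μ) / c := by
        rw [integral_sub (hint1.div_const c) (hintq.div_const c), integral_div, integral_div]
    _ = (∫ ω, D ω * (Y ω - hstar (W ω)) ∂μ) / c := by
        rw [hzero]; simp
end

section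
/- Let Y, W be integrable real random variables, D a {0,1}-valued random variable with P(D=1) > 0, and let h*, q* be measurable functions with appropriate integrability. Define τ_dr = E[ (D/E[D] − q*(Z)(1-D)/E[D]) (Y − h*(W)) ]. Suppose the treatment bridge model is correct in the sense that E[ q*(Z) 1_{D=0} | W ] = E[ D | W ] almost surely. Then τ_dr = E[ (D/E[D] − q*(Z)(1-D)/E[D]) · Y ], i.e., the term involving h* vanishes regardless of h*. -/
open MeasureTheory ProbabilityTheory

/-- second half of Proposition 1 (double robustness under a correctly
specified treatment bridge q*): if E[q*(Z)1_{D=0} | W] = E[D | W] a.s., then the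
h*-term in τ_dr vanishes regardless of h*:
τ_dr = E[(D/E[D] − q*(Z)(1−D)/E[D])·Y]. -/
theorem stmt5 {Ω γ : Type*} [MeasurableSpace Ω] [mγ : MeasurableSpace γ]
    {μ : Measure Ω} [IsProbabilityMeasure μ]
    (Y W D : Ω → ℝ) (Z : Ω → γ) (hstar : ℝ → ℝ) (qstar : γ → ℝ)
    (hY : Integrable Y μ) (hW : Integrable W μ)
    (hD01 : ∀ ω, D ω = 0 ∨ D ω = 1)
    (hDpos : 0 < μ {ω | D ω = 1})
    (hmY : Measurable Y) (hmW : Measurable W) (hmD : Measurable D)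
    (hmZ : Measurable Z) (hmh : Measurable hstar) (hmq : Measurable qstar)
    (hhW : Integrable (fun ω => hstar (W ω)) μ)
    (hint1 : Integrable
      (fun ω => qstar (Z ω) * (if D ω = 0 then (1:ℝ) else 0) * (Y ω - hstar (W ω))) μ)
    (hint2 : Integrable
      (fun ω => qstar (Z ω) * (if D ω = 0 then (1:ℝ) else 0) * hstar (W ω)) μ)
    (hint3 : Integrable (fun ω => qstar (Z ω) * (if D ω = 0 then (1:ℝ) else 0)) μ)
    -- correct treatment bridge model: E[q*(Z)1_{D=0} | W] = E[D | W] a.s.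
    (hbridge : μ[(fun ω => qstar (Z ω) * (if D ω = 0 then (1:ℝ) else 0)) |
        MeasurableSpace.comap W inferInstance]
      =ᵐ[μ] μ[D | MeasurableSpace.comap W inferInstance]) :
    ∫ ω, (D ω / (∫ ω', D ω' ∂μ)
          - qstar (Z ω) * (1 - D ω) / (∫ ω', D ω' ∂μ)) * (Y ω - hstar (W ω)) ∂μ
      = ∫ ω, (D ω / (∫ ω', D ω' ∂μ)
          - qstar (Z ω) * (1 - D ω) / (∫ ω', D ω' ∂μ)) * Y ω ∂μ := by
  classical
  set c : ℝ := ∫ ω', D ω' ∂μ with hc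
  have hm : MeasurableSpace.comap W inferInstance ≤ (inferInstance : MeasurableSpace Ω) :=
    hmW.comap_le
  set m : MeasurableSpace Ω := MeasurableSpace.comap W inferInstance with hm_def
  set q1 : Ω → ℝ := fun ω => qstar (Z ω) * (if D ω = 0 then (1:ℝ) else 0) with hq1
  have hWm : Measurable[m] W := Measurable.of_comap_le le_rfl
  have hhm : StronglyMeasurable[m] (fun ω => hstar (W ω)) :=
    (hmh.comp hWm).stronglyMeasurable
  have hDbd : ∀ ω, ‖D ω‖ ≤ 1 := by
    intro ω; rcases hD01 ω with h | h <;> simp [h]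
  have iD : Integrable D μ :=
    (integrable_const (1:ℝ)).mono' hmD.aestronglyMeasurable (ae_of_all _ hDbd)
  have iDh : Integrable (fun ω => D ω * hstar (W ω)) μ :=
    hhW.bdd_mul hmD.aestronglyMeasurable (ae_of_all _ hDbd)
  have hind : ∀ ω, (1 : ℝ) - D ω = if D ω = 0 then 1 else 0 := by
    intro ω; rcases hD01 ω with h | h <;> simp [h]
  -- key: ∫ h*(W) * q1 = ∫ h*(W) * D
  have iq1h' : Integrable (fun ω => hstar (W ω) * q1 ω) μ :=
    hint2.congr (ae_of_all _ fun ω => mul_comm _ _)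
  have iDh' : Integrable (fun ω => hstar (W ω) * D ω) μ :=
    iDh.congr (ae_of_all _ fun ω => mul_comm _ _)
  have c1 : μ[(fun ω => hstar (W ω)) * q1 | m] =ᵐ[μ] (fun ω => hstar (W ω)) * μ[q1 | m] :=
    condExp_mul_of_stronglyMeasurable_left hhm iq1h' hint3
  have c2 : μ[(fun ω => hstar (W ω)) * D | m] =ᵐ[μ] (fun ω => hstar (W ω)) * μ[D | m] :=
    condExp_mul_of_stronglyMeasurable_left hhm iDh' iD
  have key : ∫ ω, hstar (W ω) * q1 ω ∂μ = ∫ ω, hstar (W ω) * D ω ∂μ := by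
    calc ∫ ω, hstar (W ω) * q1 ω ∂μ
        = ∫ ω, (μ[(fun ω => hstar (W ω)) * q1 | m]) ω ∂μ := (integral_condExp hm).symm
      _ = ∫ ω, hstar (W ω) * (μ[q1 | m]) ω ∂μ := integral_congr_ae c1
      _ = ∫ ω, hstar (W ω) * (μ[D | m]) ω ∂μ := by
          refine integral_congr_ae ?_
          filter_upwards [hbridge] with ω hω
          rw [show (μ[q1|m]) ω = (μ[D|m]) ω from hω]
      _ = ∫ ω, (μ[(fun ω => hstar (W ω)) * D | m]) ω ∂μ := (integral_congr_ae c2).symm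
      _ = ∫ ω, hstar (W ω) * D ω ∂μ := integral_condExp hm
  -- integrability of the pieces appearing in the goal
  have iDY : Integrable (fun ω => D ω * Y ω) μ :=
    hY.bdd_mul hmD.aestronglyMeasurable (ae_of_all _ hDbd)
  have iq1Y : Integrable (fun ω => q1 ω * Y ω) μ := by
    have := hint1.add hint2
    refine this.congr (ae_of_all _ fun ω => ?_)
    simp only [Pi.add_apply]; ring
  have iAY : Integrable (fun ω => (D ω / c - q1 ω / c) * Y ω) μ := by
    have := (iDY.sub iq1Y).div_const c
    refine this.congr (ae_of_all _ fun ω => ?_)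
    simp only [Pi.sub_apply]; ring
  have iAh : Integrable (fun ω => (1/c) * (D ω * hstar (W ω) - q1 ω * hstar (W ω))) μ := by
    have iq1h : Integrable (fun ω => q1 ω * hstar (W ω)) μ := hint2
    exact ((iDh.sub iq1h).const_mul (1/c))
  -- rewrite the LHS integrand
  have hpt : ∀ ω, (D ω / c - qstar (Z ω) * (1 - D ω) / c) * (Y ω - hstar (W ω))
      = (D ω / c - q1 ω / c) * Y ω
        - (1/c) * (D ω * hstar (W ω) - q1 ω * hstar (W ω)) := by
    intro ω
    rw [hind ω, hq1]
    ring
  have hpt2 : ∀ ω, (D ω / c - qstar (Z ω) * (1 - D ω) / c) * Y ω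
      = (D ω / c - q1 ω / c) * Y ω := by
    intro ω; rw [hind ω, hq1]
  calc ∫ ω, (D ω / c - qstar (Z ω) * (1 - D ω) / c) * (Y ω - hstar (W ω)) ∂μ
      = ∫ ω, ((D ω / c - q1 ω / c) * Y ω
          - (1/c) * (D ω * hstar (W ω) - q1 ω * hstar (W ω))) ∂μ :=
        integral_congr_ae (ae_of_all _ hpt)
    _ = (∫ ω, (D ω / c - q1 ω / c) * Y ω ∂μ)
          - ∫ ω, (1/c) * (D ω * hstar (W ω) - q1 ω * hstar (W ω)) ∂μ :=
        integral_sub iAY iAh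
    _ = ∫ ω, (D ω / c - q1 ω / c) * Y ω ∂μ := by
        have : ∫ ω, (1/c) * (D ω * hstar (W ω) - q1 ω * hstar (W ω)) ∂μ = 0 := by
          rw [integral_const_mul, integral_sub iDh hint2]
          have e1 : ∫ ω, D ω * hstar (W ω) ∂μ = ∫ ω, hstar (W ω) * D ω ∂μ := by
            simp_rw [mul_comm]
          have e2 : ∫ ω, q1 ω * hstar (W ω) ∂μ = ∫ ω, hstar (W ω) * q1 ω ∂μ := by
            simp_rw [mul_comm]
          rw [e1, e2, key, sub_self, mul_zero]
        rw [this, sub_zero]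
    _ = ∫ ω, (D ω / c - qstar (Z ω) * (1 - D ω) / c) * Y ω ∂μ :=
        (integral_congr_ae (ae_of_all _ hpt2)).symm
end

section
/- Let Y, W, Z be random variables with Y, W integrable, D a {0,1}-valued random variable with P(D=1) > 0, and U a latent random variable. Assume: (i) W ⫫ D | U; (ii) Z ⫫ Y | (D,U) and Z ⫫ W | (D,U); (iii) there exists h with E[1_{D=0}(Y − h(W)) | U] = 0 a.s.; (iv) there exists q with E[1_{D=0} q(Z) | U] = E[D | U] a.s. Then the two identification formulas agree: E[ Y − h(W) | D=1 ] = E[D Y]/E[D] − E[(1−D) q(Z) Y]/E[D]. -/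
open MeasureTheory ProbabilityTheory

open MeasureTheory ProbabilityTheory Filter Set
open scoped Topology ENNReal

namespace Stmt15Aux



noncomputable def clamp (n : ℕ) (x : ℝ) : ℝ := max (-(n : ℝ)) (min x (n : ℝ))

lemma clamp_meas (n : ℕ) : Measurable (clamp n) :=
  measurable_const.max (measurable_id.min measurable_const)

lemma clamp_bound (n : ℕ) (x : ℝ) : |clamp n x| ≤ (n : ℝ) := by
  rw [abs_le]
  constructor
  · exact le_max_left _ _
  · exact max_le (by simp [n.cast_nonneg]) (min_le_right _ _)

lemma abs_clamp_le (n : ℕ) (x : ℝ) : |clamp n x| ≤ |x| := by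
  rw [abs_le]
  constructor
  · exact le_max_of_le_right (le_min (neg_abs_le x)
      ((neg_nonpos.mpr (abs_nonneg x)).trans n.cast_nonneg))
  · exact max_le ((neg_nonpos.mpr n.cast_nonneg).trans (abs_nonneg x))
      ((min_le_left _ _).trans (le_abs_self x))

lemma tendsto_clamp (x : ℝ) : Tendsto (fun n : ℕ => clamp n x) atTop (𝓝 x) := by
  have h : (fun n : ℕ => clamp n x) =ᶠ[atTop] fun _ => x := by
    filter_upwards [eventually_ge_atTop ⌈|x|⌉₊] with n hn
    have hn' : |x| ≤ (n : ℝ) := by exact_mod_cast (Nat.ceil_le.mp hn)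
    have h1 : min x (n : ℝ) = x := min_eq_left ((le_abs_self x).trans hn')
    have h2 : -(n : ℝ) ≤ x := by
      have := (neg_abs_le x); linarith
    simp [clamp, h1, max_eq_right h2]
  exact Tendsto.congr' h.symm tendsto_const_nhds




variable {Ω : Type*} [m0 : MeasurableSpace Ω] {μ : Measure Ω}

lemma tendsto_eLpNorm_zero (φ : ℕ → Ω → ℝ) (ψ : Ω → ℝ)
    (hφm : ∀ n, Measurable (φ n)) (hψm : Measurable ψ) (hψi : Integrable ψ μ)
    (hdom : ∀ n ω, |φ n ω| ≤ |ψ ω|)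
    (hpt : ∀ ω, Tendsto (fun n => φ n ω) atTop (𝓝 (ψ ω))) :
    Tendsto (fun n => eLpNorm (φ n - ψ) 1 μ) atTop (𝓝 0) := by
  have hrw : ∀ n, eLpNorm (φ n - ψ) 1 μ = ∫⁻ ω, ‖φ n ω - ψ ω‖₊ ∂μ := by
    intro n
    rw [eLpNorm_one_eq_lintegral_enorm]
    rfl
  simp_rw [hrw]
  have h0 : (0 : ℝ≥0∞) = ∫⁻ _, 0 ∂μ := by simp
  rw [h0]
  refine tendsto_lintegral_of_dominated_convergence
    (fun ω => (‖ψ ω‖₊ : ℝ≥0∞) + ‖ψ ω‖₊)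
    (fun n => (((hφm n).sub hψm).nnnorm).coe_nnreal_ennreal) ?_ ?_ ?_
  · intro n
    refine ae_of_all _ fun ω => ?_
    have h1 : ‖φ n ω - ψ ω‖₊ ≤ ‖φ n ω‖₊ + ‖ψ ω‖₊ := nnnorm_sub_le _ _
    have h2 : ‖φ n ω‖₊ ≤ ‖ψ ω‖₊ := by
      rw [← NNReal.coe_le_coe, coe_nnnorm, coe_nnnorm]
      simpa [Real.norm_eq_abs] using hdom n ω
    calc ((‖φ n ω - ψ ω‖₊ : ℝ≥0∞)) ≤ (‖φ n ω‖₊ : ℝ≥0∞) + ‖ψ ω‖₊ := by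
          exact_mod_cast h1
      _ ≤ (‖ψ ω‖₊ : ℝ≥0∞) + ‖ψ ω‖₊ := add_le_add_left (by exact_mod_cast h2) _
  · have hfin : ∫⁻ ω, (‖ψ ω‖₊ : ℝ≥0∞) ∂μ < ∞ := hψi.2
    rw [lintegral_add_left hψm.nnnorm.coe_nnreal_ennreal]
    exact (ENNReal.add_lt_top.mpr ⟨hfin, hfin⟩).ne
  · refine ae_of_all _ fun ω => ?_
    have h1 : Tendsto (fun n => φ n ω - ψ ω) atTop (𝓝 (ψ ω - ψ ω)) :=
      (hpt ω).sub tendsto_const_nhds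
    rw [sub_self] at h1
    simpa using ENNReal.tendsto_coe.mpr h1.nnnorm

lemma tim_condexp [IsProbabilityMeasure μ] {m : MeasurableSpace Ω} (hm : m ≤ m0)
    (φ : ℕ → Ω → ℝ) (ψ : Ω → ℝ) (hφm : ∀ n, Measurable[m0] (φ n))
    (hψm : Measurable[m0] ψ)
    (hψi : Integrable ψ μ) (hdom : ∀ n ω, |φ n ω| ≤ |ψ ω|)
    (hpt : ∀ ω, Tendsto (fun n => φ n ω) atTop (𝓝 (ψ ω))) :
    TendstoInMeasure μ (fun n => μ[φ n | m]) atTop (μ[ψ | m]) := by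
  have hφi : ∀ n, Integrable (φ n) μ := fun n =>
    hψi.abs.mono' ((hφm n).aestronglyMeasurable (μ := μ))
      (ae_of_all _ fun ω => by simpa [Real.norm_eq_abs] using hdom n ω)
  refine tendstoInMeasure_of_tendsto_eLpNorm (p := 1) one_ne_zero
    (fun n => (stronglyMeasurable_condExp.mono hm).aestronglyMeasurable)
    (stronglyMeasurable_condExp.mono hm).aestronglyMeasurable ?_
  have key : ∀ n, eLpNorm (μ[φ n|m] - μ[ψ|m]) 1 μ ≤ eLpNorm (φ n - ψ) 1 μ := by
    intro n
    have h1 : μ[φ n|m] - μ[ψ|m] =ᵐ[μ] μ[φ n - ψ|m] := (condExp_sub (hφi n) hψi m).symm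
    rw [eLpNorm_congr_ae h1]
    exact eLpNorm_one_condExp_le_eLpNorm _
  exact tendsto_of_tendsto_of_tendsto_of_le_of_le tendsto_const_nhds
    (tendsto_eLpNorm_zero (m0 := m0) φ ψ hφm hψm hψi hdom hpt) (fun n => zero_le) key

lemma tim_const (f : Ω → ℝ) : TendstoInMeasure μ (fun _ : ℕ => f) atTop f := by
  intro ε hε
  have hset : {x : Ω | ε ≤ edist (f x) (f x)} = ∅ := by
    ext x
    simp only [edist_self, mem_setOf_eq, mem_empty_iff_false, iff_false, not_le]
    exact hε
  simp only [hset, measure_empty]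
  exact tendsto_const_nhds

lemma ae_eq_of_tim (c X Yb Zb : Ω → ℝ) (Xn Yn Zn : ℕ → Ω → ℝ)
    (hX : TendstoInMeasure μ Xn atTop X) (hY : TendstoInMeasure μ Yn atTop Yb)
    (hZ : TendstoInMeasure μ Zn atTop Zb)
    (heq : ∀ n, Xn n =ᵐ[μ] fun ω => c ω * Yn n ω * Zn n ω) :
    X =ᵐ[μ] fun ω => c ω * Yb ω * Zb ω := by
  obtain ⟨n1, hn1, hae1⟩ := hX.exists_seq_tendsto_ae
  have hY1 : TendstoInMeasure μ (fun i => Yn (n1 i)) atTop Yb :=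
    fun ε hε => (hY ε hε).comp hn1.tendsto_atTop
  obtain ⟨n2, hn2, hae2⟩ := hY1.exists_seq_tendsto_ae
  have hZ2 : TendstoInMeasure μ (fun i => Zn (n1 (n2 i))) atTop Zb :=
    fun ε hε => (hZ ε hε).comp (hn1.comp hn2).tendsto_atTop
  obtain ⟨n3, hn3, hae3⟩ := hZ2.exists_seq_tendsto_ae
  have hae1' : ∀ᵐ ω ∂μ, Tendsto (fun i => Xn (n1 (n2 (n3 i))) ω) atTop (𝓝 (X ω)) :=
    hae1.mono fun ω hω => hω.comp (hn2.comp hn3).tendsto_atTop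
  have hae2' : ∀ᵐ ω ∂μ, Tendsto (fun i => Yn (n1 (n2 (n3 i))) ω) atTop (𝓝 (Yb ω)) :=
    hae2.mono fun ω hω => hω.comp hn3.tendsto_atTop
  have heqall : ∀ᵐ ω ∂μ, ∀ n, Xn n ω = c ω * Yn n ω * Zn n ω := ae_all_iff.2 heq
  filter_upwards [hae1', hae2', hae3, heqall] with ω h1 h2 h3 h4
  refine tendsto_nhds_unique h1 ?_
  have := (tendsto_const_nhds (x := c ω)).mul h2 |>.mul h3
  simpa [h4] using this




/-- Set-level: every set measurable w.r.t. `F ⊔ σ(D)` agrees on `{D = 0}` with an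
`F`-measurable set. -/
lemma exists_set_decomp {Ω : Type*} {F : MeasurableSpace Ω} {D : Ω → ℝ} {S : Set Ω}
    (hS : MeasurableSet[F ⊔ MeasurableSpace.comap D Real.measurableSpace] S) :
    ∃ S', MeasurableSet[F] S' ∧ S ∩ {ω | D ω = 0} = S' ∩ {ω | D ω = 0} := by
  classical
  set D0 : Set Ω := {ω | D ω = 0}
  let m' : MeasurableSpace Ω :=
    { MeasurableSet' := fun S => ∃ S', MeasurableSet[F] S' ∧ S ∩ D0 = S' ∩ D0
      measurableSet_empty := ⟨∅, MeasurableSet.empty, rfl⟩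
      measurableSet_compl := by
        rintro S ⟨S', hS', hEq⟩
        refine ⟨S'ᶜ, hS'.compl, ?_⟩
        ext ω
        have h := Set.ext_iff.mp hEq ω
        simp only [Set.mem_inter_iff, Set.mem_compl_iff] at h ⊢
        tauto
      measurableSet_iUnion := by
        intro f hf
        choose g hg1 hg2 using hf
        refine ⟨⋃ i, g i, MeasurableSet.iUnion hg1, ?_⟩
        rw [Set.iUnion_inter, Set.iUnion_inter]
        exact Set.iUnion_congr hg2 }
  have hle : F ⊔ MeasurableSpace.comap D Real.measurableSpace ≤ m' := by
    refine sup_le (fun S hS => ⟨S, hS, rfl⟩) ?_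
    rintro S ⟨B, hB, rfl⟩
    by_cases h0 : (0 : ℝ) ∈ B
    · refine ⟨Set.univ, @MeasurableSet.univ Ω F, ?_⟩
      ext ω
      simp only [Set.mem_inter_iff, Set.mem_preimage, Set.mem_univ, true_and, D0,
        Set.mem_setOf_eq]
      constructor
      · exact fun h => h.2
      · exact fun h => ⟨by rw [h]; exact h0, h⟩
    · refine ⟨∅, @MeasurableSet.empty Ω F, ?_⟩
      ext ω
      simp only [Set.mem_inter_iff, Set.mem_preimage, Set.mem_empty_iff_false, false_and,
        iff_false, D0, Set.mem_setOf_eq, not_and]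
      intro hB' hD
      exact h0 (by rwa [hD] at hB')
  exact hle _ hS

/-- Function-level: every `F ⊔ σ(D)`-measurable real function agrees on `{D = 0}`
with an `F`-measurable function. -/
lemma exists_fun_decomp {Ω : Type*} {F : MeasurableSpace Ω} {D : Ω → ℝ} {ψ : Ω → ℝ}
    (hψ : Measurable[F ⊔ MeasurableSpace.comap D Real.measurableSpace] ψ) :
    ∃ a : Ω → ℝ, Measurable[F] a ∧ ∀ ω, D ω = 0 → a ω = ψ ω := by
  classical
  set ψb : Ω → ℝ := fun ω => Real.arctan (ψ ω) with hψbdef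
  have hψbm : Measurable[F ⊔ MeasurableSpace.comap D Real.measurableSpace] ψb :=
    Real.continuous_arctan.measurable.comp hψ
  have hψbbd : ∀ ω, |ψb ω| ≤ 2 := by
    intro ω
    have h1 : |Real.arctan (ψ ω)| < Real.pi / 2 :=
      abs_lt.mpr ⟨Real.neg_pi_div_two_lt_arctan _, Real.arctan_lt_pi_div_two _⟩
    have h2 : Real.pi ≤ 4 := Real.pi_le_four
    simp only [hψbdef]
    linarith
  have hSr : ∀ r : ℚ, ∃ S', MeasurableSet[F] S' ∧
      (ψb ⁻¹' Set.Iio (r : ℝ)) ∩ {ω | D ω = 0} = S' ∩ {ω | D ω = 0} :=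
    fun r => exists_set_decomp (hψbm measurableSet_Iio)
  choose S' hS'm hS'eq using hSr
  set g : ℚ → Ω → ℝ := fun r ω =>
    if (2 : ℝ) < (r : ℝ) then (r : ℝ)
    else if (-3 : ℝ) ≤ (r : ℝ) then (if ω ∈ S' r then (r : ℝ) else 3) else 3 with hgdef
  have hgm : ∀ r, Measurable[F] (g r) := by
    intro r
    by_cases h1 : (2 : ℝ) < (r : ℝ)
    · simpa [hgdef, h1] using measurable_const (m := F)
    · by_cases h2 : (-3 : ℝ) ≤ (r : ℝ)
      · simp only [hgdef, h1, if_false, h2, if_true]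
        exact Measurable.ite (hS'm r) measurable_const measurable_const
      · simpa [hgdef, h1, h2] using measurable_const (m := F)
  set a' : Ω → ℝ := fun ω => ⨅ r : ℚ, g r ω with ha'def
  have ha'm : Measurable[F] a' := Measurable.iInf hgm
  have htan : Measurable Real.tan := by
    have : Real.tan = fun x => Real.sin x / Real.cos x := funext Real.tan_eq_sin_div_cos
    rw [this]
    exact Real.continuous_sin.measurable.div Real.continuous_cos.measurable
  refine ⟨fun ω => Real.tan (a' ω), htan.comp ha'm, ?_⟩
  intro ω hω
  have hmem : ∀ r : ℚ, (ψb ω < (r : ℝ) ↔ ω ∈ S' r) := by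
    intro r
    have h := Set.ext_iff.mp (hS'eq r) ω
    simp only [Set.mem_inter_iff, Set.mem_preimage, Set.mem_Iio, Set.mem_setOf_eq, hω,
      and_true] at h
    exact h
  have hglb : IsGLB (Set.range fun r : ℚ => g r ω) (ψb ω) := by
    constructor
    · rintro x ⟨r, rfl⟩
      by_cases h1 : (2 : ℝ) < (r : ℝ)
      · simp only [hgdef, h1, if_true]
        have := hψbbd ω
        have := abs_le.mp this
        linarith [this.2]
      · by_cases h2 : (-3 : ℝ) ≤ (r : ℝ)
        · by_cases h3 : ω ∈ S' r
          · simp only [hgdef, h1, if_false, h2, if_true, h3]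
            exact le_of_lt ((hmem r).mpr h3)
          · simp only [hgdef, h1, if_false, h2, if_true, h3]
            have := (abs_le.mp (hψbbd ω)).2
            linarith
        · simp only [hgdef, h1, if_false, h2]
          have := (abs_le.mp (hψbbd ω)).2
          linarith
    · intro x hx
      by_contra hlt
      push_neg at hlt
      obtain ⟨r, hr1, hr2⟩ := exists_rat_btwn hlt
      have hgr : g r ω = (r : ℝ) := by
        by_cases h1 : (2 : ℝ) < (r : ℝ)
        · simp [hgdef, h1]
        · have h3 : ω ∈ S' r := (hmem r).mp hr1
          have h2 : (-3 : ℝ) ≤ (r : ℝ) := by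
            have := (abs_le.mp (hψbbd ω)).1
            linarith
          simp [hgdef, h1, h2, h3]
      have h5 : x ≤ g r ω := hx ⟨r, rfl⟩
      rw [hgr] at h5
      linarith
  have ha'ω : a' ω = ψb ω := hglb.ciInf_eq
  show Real.tan (a' ω) = ψ ω
  rw [ha'ω]
  exact Real.tan_arctan (ψ ω)


lemma main {Ω : Type*} {F G : MeasurableSpace Ω} [m0 : MeasurableSpace Ω]
    {μ : Measure Ω} [IsProbabilityMeasure μ]
    (Y QZ HW D E : Ω → ℝ)
    (hGdef : G = F ⊔ MeasurableSpace.comap D Real.measurableSpace)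
    (hF : F ≤ m0) (hG : G ≤ m0)
    (hE : ∀ ω, E ω = if D ω = 0 then (1 : ℝ) else 0)
    (hmY : Measurable[m0] Y) (hmQZ : Measurable[m0] QZ) (hmHW : Measurable[m0] HW)
    (hmD : Measurable[m0] D)
    (hD01 : ∀ ω, D ω = 0 ∨ D ω = 1)
    (hY : Integrable Y μ) (hQZ : Integrable QZ μ) (hHW : Integrable HW μ)
    (hEQY : Integrable (fun ω => E ω * (QZ ω * Y ω)) μ)
    (hCI1 : ∀ n : ℕ, μ[(fun ω => clamp n (QZ ω) * clamp n (Y ω)) | G]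
      =ᵐ[μ] fun ω => (μ[(fun ω' => clamp n (QZ ω')) | G]) ω *
        (μ[(fun ω' => clamp n (Y ω')) | G]) ω)
    (hCI3 : ∀ n : ℕ, μ[(fun ω => clamp n (HW ω)) | G]
      =ᵐ[μ] μ[(fun ω => clamp n (HW ω)) | F])
    (hbh : μ[(fun ω => E ω * (Y ω - HW ω)) | F] =ᵐ[μ] 0)
    (hbq : μ[(fun ω => E ω * QZ ω) | F] =ᵐ[μ] μ[D | F]) :
    ∫ ω, D ω * HW ω ∂μ = ∫ ω, E ω * (QZ ω * Y ω) ∂μ := by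
  classical
  have hFG : F ≤ G := hGdef ▸ le_sup_left
  have hDG : MeasurableSpace.comap D Real.measurableSpace ≤ G := hGdef ▸ le_sup_right
  -- measurability of E
  have hmE0 : Measurable[MeasurableSpace.comap D Real.measurableSpace] E := by
    have h1 : Measurable (fun x : ℝ => if x = 0 then (1 : ℝ) else 0) := by
      refine Measurable.ite ?_ measurable_const measurable_const
      simpa [Set.setOf_eq_eq_singleton] using (measurableSet_singleton (0 : ℝ))
    have h2 : E = (fun x : ℝ => if x = 0 then (1 : ℝ) else 0) ∘ D :=
      funext fun ω => by simp [hE ω, Function.comp]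
    rw [h2]
    exact h1.comp (comap_measurable D)
  have hmEG : Measurable[G] E := hmE0.mono hDG le_rfl
  have hsEG : StronglyMeasurable[G] E := hmEG.stronglyMeasurable
  have hmE : Measurable[m0] E := hmE0.mono (hDG.trans hG) le_rfl
  have hsDG : StronglyMeasurable[G] D :=
    ((comap_measurable D).mono hDG le_rfl).stronglyMeasurable
  -- bounds
  have hEbd : ∀ ω, |E ω| ≤ 1 := fun ω => by rw [hE ω]; split <;> norm_num
  have hDbd : ∀ ω, |D ω| ≤ 1 := fun ω => by rcases hD01 ω with h | h <;> simp [h]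
  -- integrability
  have hIntD : Integrable D μ :=
    (integrable_const (1 : ℝ)).mono' hmD.aestronglyMeasurable
      (ae_of_all _ fun ω => by simpa [Real.norm_eq_abs] using hDbd ω)
  have hIntE : Integrable E μ :=
    (integrable_const (1 : ℝ)).mono' hmE.aestronglyMeasurable
      (ae_of_all _ fun ω => by simpa [Real.norm_eq_abs] using hEbd ω)
  have habs_mul_le : ∀ (c f : Ω → ℝ), (∀ ω, |c ω| ≤ 1) → ∀ ω, ‖c ω * f ω‖ ≤ |f ω| := by
    intro c f hc ω
    rw [Real.norm_eq_abs, abs_mul]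
    exact mul_le_of_le_one_left (abs_nonneg _) (hc ω)
  have hIntEQZ : Integrable (fun ω => E ω * QZ ω) μ :=
    hQZ.abs.mono' (hmE.mul hmQZ).aestronglyMeasurable
      (ae_of_all _ fun ω => habs_mul_le E QZ hEbd ω)
  have hIntEY : Integrable (fun ω => E ω * Y ω) μ :=
    hY.abs.mono' (hmE.mul hmY).aestronglyMeasurable
      (ae_of_all _ fun ω => habs_mul_le E Y hEbd ω)
  have hIntEHW : Integrable (fun ω => E ω * HW ω) μ :=
    hHW.abs.mono' (hmE.mul hmHW).aestronglyMeasurable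
      (ae_of_all _ fun ω => habs_mul_le E HW hEbd ω)
  have hIntDHW : Integrable (fun ω => D ω * HW ω) μ :=
    hHW.abs.mono' (hmD.mul hmHW).aestronglyMeasurable
      (ae_of_all _ fun ω => habs_mul_le D HW hDbd ω)
  -- pull-out of E at level G
  have hpullE : ∀ f : Ω → ℝ, Measurable[m0] f → Integrable f μ →
      μ[(fun ω => E ω * f ω) | G] =ᵐ[μ] fun ω => E ω * (μ[f | G]) ω := by
    intro f hmf hf
    have hint : Integrable (E * f) μ :=
      hf.abs.mono' (hmE.mul hmf).aestronglyMeasurable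
        (ae_of_all _ fun ω => habs_mul_le E f hEbd ω)
    exact condExp_mul_of_stronglyMeasurable_left hsEG hint hf
  -- Step 1 : μ[HW|G] = μ[HW|F] a.e.
  have hstep1 : μ[HW | G] =ᵐ[μ] μ[HW | F] := by
    have h := ae_eq_of_tim (μ := μ) (fun _ => (1 : ℝ)) (μ[HW | G]) (μ[HW | F])
      (fun _ => (1 : ℝ))
      (fun n => μ[(fun ω => clamp n (HW ω)) | G])
      (fun n => μ[(fun ω => clamp n (HW ω)) | F])
      (fun _ _ => (1 : ℝ))
      (tim_condexp hG _ HW (fun n => (clamp_meas n).comp hmHW) hmHW hHW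
        (fun n ω => abs_clamp_le n (HW ω)) (fun ω => tendsto_clamp (HW ω)))
      (tim_condexp hF _ HW (fun n => (clamp_meas n).comp hmHW) hmHW hHW
        (fun n ω => abs_clamp_le n (HW ω)) (fun ω => tendsto_clamp (HW ω)))
      (tim_const _)
      (fun n => (hCI3 n).trans (ae_of_all _ fun ω => by ring))
    exact h.trans (ae_of_all _ fun ω => by ring)
  -- Step 2 : μ[E·(QZ·Y)|G] = E · μ[QZ|G] · μ[Y|G] a.e.
  have hstep2 : μ[(fun ω => E ω * (QZ ω * Y ω)) | G]
      =ᵐ[μ] fun ω => E ω * (μ[QZ | G]) ω * (μ[Y | G]) ω := by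
    refine ae_eq_of_tim (μ := μ) E _ (μ[QZ | G]) (μ[Y | G])
      (fun n => μ[(fun ω => E ω * (clamp n (QZ ω) * clamp n (Y ω))) | G])
      (fun n => μ[(fun ω' => clamp n (QZ ω')) | G])
      (fun n => μ[(fun ω' => clamp n (Y ω')) | G])
      ?_ ?_ ?_ ?_
    · refine tim_condexp hG _ _ (fun n => hmE.mul (((clamp_meas n).comp hmQZ).mul
        ((clamp_meas n).comp hmY))) (hmE.mul (hmQZ.mul hmY)) hEQY ?_ ?_
      · intro n ω
        have h1 : |E ω * (clamp n (QZ ω) * clamp n (Y ω))|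
            = |E ω| * (|clamp n (QZ ω)| * |clamp n (Y ω)|) := by rw [abs_mul, abs_mul]
        have h2 : |E ω * (QZ ω * Y ω)| = |E ω| * (|QZ ω| * |Y ω|) := by rw [abs_mul, abs_mul]
        rw [h1, h2]
        exact mul_le_mul_of_nonneg_left
          (mul_le_mul (abs_clamp_le n _) (abs_clamp_le n _) (abs_nonneg _) (abs_nonneg _))
          (abs_nonneg _)
      · intro ω
        exact tendsto_const_nhds.mul ((tendsto_clamp (QZ ω)).mul (tendsto_clamp (Y ω)))
    · exact tim_condexp hG _ QZ (fun n => (clamp_meas n).comp hmQZ) hmQZ hQZ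
        (fun n ω => abs_clamp_le n (QZ ω)) (fun ω => tendsto_clamp (QZ ω))
    · exact tim_condexp hG _ Y (fun n => (clamp_meas n).comp hmY) hmY hY
        (fun n ω => abs_clamp_le n (Y ω)) (fun ω => tendsto_clamp (Y ω))
    · intro n
      have hintc : Integrable (fun ω => clamp n (QZ ω) * clamp n (Y ω)) μ := by
        refine (integrable_const ((n : ℝ) * n)).mono'
          ((((clamp_meas n).comp hmQZ).mul ((clamp_meas n).comp hmY)).aestronglyMeasurable)
          (ae_of_all _ fun ω => ?_)
        rw [Real.norm_eq_abs, abs_mul]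
        exact mul_le_mul (clamp_bound n _) (clamp_bound n _) (abs_nonneg _) (n.cast_nonneg)
      have hintEc : Integrable (E * fun ω => clamp n (QZ ω) * clamp n (Y ω)) μ :=
        hintc.abs.mono' (hmE.mul (((clamp_meas n).comp hmQZ).mul
          ((clamp_meas n).comp hmY))).aestronglyMeasurable
          (ae_of_all _ fun ω =>
            habs_mul_le E (fun ω' => clamp n (QZ ω') * clamp n (Y ω')) hEbd ω)
      have hpull := condExp_mul_of_stronglyMeasurable_left hsEG hintEc hintc
      refine hpull.trans ?_
      filter_upwards [hCI1 n] with ω hω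
      show E ω * (μ[(fun ω' => clamp n (QZ ω') * clamp n (Y ω')) | G]) ω
        = E ω * (μ[(fun ω' => clamp n (QZ ω')) | G]) ω * (μ[(fun ω' => clamp n (Y ω')) | G]) ω
      rw [hω, mul_assoc]
  -- decomposition of the conditional expectations on {D = 0}
  obtain ⟨a, hma, haeq⟩ := exists_fun_decomp (F := F) (D := D)
    (ψ := μ[QZ | G]) (by rw [← hGdef]; exact stronglyMeasurable_condExp.measurable)
  obtain ⟨b, hmb, hbeq⟩ := exists_fun_decomp (F := F) (D := D)
    (ψ := μ[Y | G]) (by rw [← hGdef]; exact stronglyMeasurable_condExp.measurable)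
  have hEa : ∀ ω, E ω * (μ[QZ | G]) ω = E ω * a ω := by
    intro ω
    by_cases hω : D ω = 0
    · rw [haeq ω hω]
    · simp [hE ω, if_neg hω]
  have hEb : ∀ ω, E ω * (μ[Y | G]) ω = E ω * b ω := by
    intro ω
    by_cases hω : D ω = 0
    · rw [hbeq ω hω]
    · simp [hE ω, if_neg hω]
  -- a.e. identifications of E·A, E·B, E·CF with conditional expectations
  have hEA : (fun ω => E ω * (μ[QZ | G]) ω) =ᵐ[μ] μ[(fun ω => E ω * QZ ω) | G] :=
    (hpullE QZ hmQZ hQZ).symm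
  have hEB : (fun ω => E ω * (μ[Y | G]) ω) =ᵐ[μ] μ[(fun ω => E ω * Y ω) | G] :=
    (hpullE Y hmY hY).symm
  have hEC : (fun ω => E ω * (μ[HW | F]) ω) =ᵐ[μ] μ[(fun ω => E ω * HW ω) | G] := by
    have h1 : (fun ω => E ω * (μ[HW | F]) ω) =ᵐ[μ] (fun ω => E ω * (μ[HW | G]) ω) :=
      hstep1.mono fun ω hω => by
        show E ω * (μ[HW | F]) ω = E ω * (μ[HW | G]) ω
        rw [hω]
    exact h1.trans (hpullE HW hmHW hHW).symm
  have hIntEB : Integrable (fun ω => E ω * (μ[Y | G]) ω) μ :=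
    integrable_condExp.congr hEB.symm
  have hIntEA : Integrable (fun ω => E ω * (μ[QZ | G]) ω) μ :=
    integrable_condExp.congr hEA.symm
  have hIntEC : Integrable (fun ω => E ω * (μ[HW | F]) ω) μ :=
    integrable_condExp.congr hEC.symm
  -- (6a) : b·μ[E|F] = CF·μ[E|F] a.e.
  have hbEint : Integrable (fun ω => b ω * E ω) μ :=
    hIntEB.congr (ae_of_all _ fun ω =>
      show E ω * (μ[Y | G]) ω = b ω * E ω by rw [hEb ω]; ring)
  have p1 : μ[(fun ω => b ω * E ω) | F] =ᵐ[μ] fun ω => b ω * (μ[E | F]) ω :=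
    condExp_mul_of_stronglyMeasurable_left hmb.stronglyMeasurable hbEint hIntE
  have p2 : μ[(fun ω => b ω * E ω) | F] =ᵐ[μ] μ[(fun ω => E ω * Y ω) | F] := by
    have h1 : (fun ω => b ω * E ω) =ᵐ[μ] μ[(fun ω => E ω * Y ω) | G] := by
      refine EventuallyEq.trans (ae_of_all _ fun ω => ?_) hEB
      show b ω * E ω = E ω * (μ[Y | G]) ω
      rw [hEb ω]; ring
    exact (condExp_congr_ae h1).trans (condExp_condExp_of_le hFG hG)
  have hCFEint : Integrable (fun ω => (μ[HW | F]) ω * E ω) μ :=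
    hIntEC.congr (ae_of_all _ fun ω => mul_comm _ _)
  have p3 : μ[(fun ω => (μ[HW | F]) ω * E ω) | F]
      =ᵐ[μ] fun ω => (μ[HW | F]) ω * (μ[E | F]) ω :=
    condExp_mul_of_stronglyMeasurable_left stronglyMeasurable_condExp hCFEint hIntE
  have p4 : μ[(fun ω => (μ[HW | F]) ω * E ω) | F] =ᵐ[μ] μ[(fun ω => E ω * HW ω) | F] := by
    have h1 : (fun ω => (μ[HW | F]) ω * E ω) =ᵐ[μ] μ[(fun ω => E ω * HW ω) | G] := by
      refine EventuallyEq.trans (ae_of_all _ fun ω => ?_) hEC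
      show (μ[HW | F]) ω * E ω = E ω * (μ[HW | F]) ω
      ring
    exact (condExp_congr_ae h1).trans (condExp_condExp_of_le hFG hG)
  have p5 : μ[(fun ω => E ω * Y ω) | F] =ᵐ[μ] μ[(fun ω => E ω * HW ω) | F] := by
    have h1 : μ[(fun ω => E ω * Y ω - E ω * HW ω) | F]
        =ᵐ[μ] μ[(fun ω => E ω * Y ω) | F] - μ[(fun ω => E ω * HW ω) | F] :=
      condExp_sub hIntEY hIntEHW F
    have h2 : μ[(fun ω => E ω * Y ω - E ω * HW ω) | F] =ᵐ[μ] 0 := by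
      have h3 : (fun ω => E ω * Y ω - E ω * HW ω) = fun ω => E ω * (Y ω - HW ω) :=
        funext fun ω => (mul_sub _ _ _).symm
      rw [h3]
      exact hbh
    have h4 : μ[(fun ω => E ω * Y ω) | F] - μ[(fun ω => E ω * HW ω) | F] =ᵐ[μ] 0 :=
      h1.symm.trans h2
    filter_upwards [h4] with ω hω
    have : (μ[(fun ω => E ω * Y ω) | F]) ω - (μ[(fun ω => E ω * HW ω) | F]) ω = 0 := hω
    linarith
  have h6a : (fun ω => b ω * (μ[E | F]) ω) =ᵐ[μ] fun ω => (μ[HW | F]) ω * (μ[E | F]) ω :=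
    p1.symm.trans (p2.trans (p5.trans (p4.symm.trans p3)))
  -- (6b) : a·μ[E|F] = μ[D|F] a.e.
  have haEint : Integrable (fun ω => a ω * E ω) μ :=
    hIntEA.congr (ae_of_all _ fun ω =>
      show E ω * (μ[QZ | G]) ω = a ω * E ω by rw [hEa ω]; ring)
  have q1 : μ[(fun ω => a ω * E ω) | F] =ᵐ[μ] fun ω => a ω * (μ[E | F]) ω :=
    condExp_mul_of_stronglyMeasurable_left hma.stronglyMeasurable haEint hIntE
  have q2 : μ[(fun ω => a ω * E ω) | F] =ᵐ[μ] μ[(fun ω => E ω * QZ ω) | F] := by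
    have h1 : (fun ω => a ω * E ω) =ᵐ[μ] μ[(fun ω => E ω * QZ ω) | G] := by
      refine EventuallyEq.trans (ae_of_all _ fun ω => ?_) hEA
      show a ω * E ω = E ω * (μ[QZ | G]) ω
      rw [hEa ω]; ring
    exact (condExp_congr_ae h1).trans (condExp_condExp_of_le hFG hG)
  have h6b : (fun ω => a ω * (μ[E | F]) ω) =ᵐ[μ] μ[D | F] :=
    q1.symm.trans (q2.trans hbq)
  -- final chain
  have hptab : ∀ ω, E ω * (μ[QZ | G]) ω * (μ[Y | G]) ω = a ω * b ω * E ω := by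
    intro ω
    by_cases hω : D ω = 0
    · rw [haeq ω hω, hbeq ω hω, hE ω, if_pos hω]
      ring
    · simp [hE ω, if_neg hω]
  have hIntEAB : Integrable (fun ω => E ω * (μ[QZ | G]) ω * (μ[Y | G]) ω) μ :=
    integrable_condExp.congr hstep2
  have hIntabE : Integrable (fun ω => a ω * b ω * E ω) μ := by
    refine hIntEAB.congr (ae_of_all _ fun ω => hptab ω)
  have hIntCFD : Integrable (fun ω => (μ[HW | F]) ω * D ω) μ :=
    integrable_condExp.abs.mono'
      ((stronglyMeasurable_condExp.mono hF).measurable.mul hmD).aestronglyMeasurable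
      (ae_of_all _ fun ω => by
        rw [Real.norm_eq_abs, abs_mul]
        exact mul_le_of_le_one_right (abs_nonneg _) (hDbd ω))
  calc ∫ ω, D ω * HW ω ∂μ
      = ∫ ω, (μ[(fun ω' => D ω' * HW ω') | G]) ω ∂μ := (integral_condExp hG).symm
    _ = ∫ ω, D ω * (μ[HW | G]) ω ∂μ :=
        integral_congr_ae (condExp_mul_of_stronglyMeasurable_left hsDG hIntDHW hHW)
    _ = ∫ ω, (μ[HW | F]) ω * D ω ∂μ := by
        refine integral_congr_ae (hstep1.mono fun ω hω => ?_)
        show D ω * (μ[HW | G]) ω = (μ[HW | F]) ω * D ω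
        rw [hω]; ring
    _ = ∫ ω, (μ[(fun ω' => (μ[HW | F]) ω' * D ω') | F]) ω ∂μ := (integral_condExp hF).symm
    _ = ∫ ω, (μ[HW | F]) ω * (μ[D | F]) ω ∂μ := by
        refine integral_congr_ae
          (condExp_mul_of_stronglyMeasurable_left stronglyMeasurable_condExp hIntCFD hIntD)
    _ = ∫ ω, a ω * b ω * (μ[E | F]) ω ∂μ := by
        refine integral_congr_ae ?_
        filter_upwards [h6a, h6b] with ω h1 h2
        calc (μ[HW | F]) ω * (μ[D | F]) ω
            = (μ[HW | F]) ω * (a ω * (μ[E | F]) ω) := by rw [h2]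
          _ = a ω * ((μ[HW | F]) ω * (μ[E | F]) ω) := by ring
          _ = a ω * (b ω * (μ[E | F]) ω) := by rw [← h1]
          _ = a ω * b ω * (μ[E | F]) ω := by ring
    _ = ∫ ω, (μ[(fun ω' => a ω' * b ω' * E ω') | F]) ω ∂μ := by
        refine (integral_congr_ae
          (condExp_mul_of_stronglyMeasurable_left ((hma.mul hmb).stronglyMeasurable) ?_ hIntE)).symm
        exact hIntabE
    _ = ∫ ω, a ω * b ω * E ω ∂μ := integral_condExp hF
    _ = ∫ ω, E ω * (μ[QZ | G]) ω * (μ[Y | G]) ω ∂μ :=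
        (integral_congr_ae (ae_of_all _ fun ω => hptab ω)).symm
    _ = ∫ ω, (μ[(fun ω' => E ω' * (QZ ω' * Y ω')) | G]) ω ∂μ :=
        (integral_congr_ae hstep2).symm
    _ = ∫ ω, E ω * (QZ ω * Y ω) ∂μ := integral_condExp hG


end Stmt15Aux

/-- agreement of the outcome-bridge and treatment-bridge
identifications (Theorems 1 and 2 combined): under the negative control conditional
independences and existence of both bridges h and q,
E[Y − h(W) | D=1] = E[DY]/E[D] − E[(1−D)q(Z)Y]/E[D]. -/
theorem stmt15 {Ω β γ : Type*} [MeasurableSpace Ω] [mβ : MeasurableSpace β]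
    [mγ : MeasurableSpace γ] {μ : Measure Ω} [IsProbabilityMeasure μ]
    (Y W D : Ω → ℝ) (U : Ω → β) (Z : Ω → γ) (h : ℝ → ℝ) (q : γ → ℝ)
    (hY : Integrable Y μ) (hW : Integrable W μ)
    (hD01 : ∀ ω, D ω = 0 ∨ D ω = 1)
    (hDpos : 0 < μ {ω | D ω = 1})
    (hmY : Measurable Y) (hmW : Measurable W) (hmD : Measurable D)
    (hmU : Measurable U) (hmZ : Measurable Z)
    (hmh : Measurable h) (hmq : Measurable q)
    (hhW : Integrable (fun ω => h (W ω)) μ)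
    (hqZY : Integrable (fun ω => (1 - D ω) * q (Z ω) * Y ω) μ)
    (hDY : Integrable (fun ω => D ω * Y ω) μ)
    (hqZ : Integrable (fun ω => q (Z ω)) μ)
    -- (i) W ⫫ D | U
    (hWD : ∀ f : ℝ → ℝ, Measurable f → (∃ Cf, ∀ x, |f x| ≤ Cf) →
      μ[(fun ω => f (W ω)) |
          (mβ.comap U ⊔ MeasurableSpace.comap D inferInstance)]
        =ᵐ[μ] μ[(fun ω => f (W ω)) | mβ.comap U])
    -- (ii) Z ⫫ Y | (D,U)
    (hZY : ∀ (f : γ → ℝ) (g : ℝ → ℝ), Measurable f → Measurable g →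
      (∃ Cf, ∀ x, |f x| ≤ Cf) → (∃ Cg, ∀ x, |g x| ≤ Cg) →
      μ[(fun ω => f (Z ω) * g (Y ω)) |
          (mβ.comap U ⊔ MeasurableSpace.comap D inferInstance)]
        =ᵐ[μ] (fun ω =>
          ((μ[(fun ω' => f (Z ω')) |
              (mβ.comap U ⊔ MeasurableSpace.comap D inferInstance)]) ω) *
          ((μ[(fun ω' => g (Y ω')) |
              (mβ.comap U ⊔ MeasurableSpace.comap D inferInstance)]) ω)))
    -- (ii') Z ⫫ W | (D,U)
    (hZW : ∀ (f : γ → ℝ) (g : ℝ → ℝ), Measurable f → Measurable g →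
      (∃ Cf, ∀ x, |f x| ≤ Cf) → (∃ Cg, ∀ x, |g x| ≤ Cg) →
      μ[(fun ω => f (Z ω) * g (W ω)) |
          (mβ.comap U ⊔ MeasurableSpace.comap D inferInstance)]
        =ᵐ[μ] (fun ω =>
          ((μ[(fun ω' => f (Z ω')) |
              (mβ.comap U ⊔ MeasurableSpace.comap D inferInstance)]) ω) *
          ((μ[(fun ω' => g (W ω')) |
              (mβ.comap U ⊔ MeasurableSpace.comap D inferInstance)]) ω)))
    -- (iii) outcome bridge: E[1_{D=0}(Y − h(W)) | U] = 0 a.s.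
    (hbridgeh : μ[(fun ω => (if D ω = 0 then (1:ℝ) else 0) * (Y ω - h (W ω))) |
        mβ.comap U] =ᵐ[μ] 0)
    -- (iv) treatment bridge: E[1_{D=0} q(Z) | U] = E[D | U] a.s.
    (hbridgeq : μ[(fun ω => (if D ω = 0 then (1:ℝ) else 0) * q (Z ω)) | mβ.comap U]
        =ᵐ[μ] μ[D | mβ.comap U]) :
    (∫ ω, D ω * (Y ω - h (W ω)) ∂μ) / (∫ ω, D ω ∂μ)
      = (∫ ω, D ω * Y ω ∂μ) / (∫ ω, D ω ∂μ)
        - (∫ ω, (1 - D ω) * q (Z ω) * Y ω ∂μ) / (∫ ω, D ω ∂μ) := by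
  classical
  have he0 : ∀ ω, (if D ω = 0 then (1 : ℝ) else 0) = 1 - D ω := fun ω => by
    rcases hD01 ω with h' | h' <;> simp [h']
  have hEQY : Integrable
      (fun ω => (if D ω = 0 then (1 : ℝ) else 0) * (q (Z ω) * Y ω)) μ := by
    have heq : (fun ω => (if D ω = 0 then (1 : ℝ) else 0) * (q (Z ω) * Y ω))
        = fun ω => (1 - D ω) * q (Z ω) * Y ω := funext fun ω => by rw [he0 ω]; ring
    rw [heq]; exact hqZY
  have key : ∫ ω, D ω * h (W ω) ∂μ
      = ∫ ω, (if D ω = 0 then (1 : ℝ) else 0) * (q (Z ω) * Y ω) ∂μ := by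
    refine Stmt15Aux.main (F := mβ.comap U)
      (G := mβ.comap U ⊔ MeasurableSpace.comap D inferInstance)
      Y (fun ω => q (Z ω)) (fun ω => h (W ω)) D
      (fun ω => if D ω = 0 then (1 : ℝ) else 0) rfl
      hmU.comap_le (sup_le hmU.comap_le hmD.comap_le)
      (fun ω => rfl) hmY (hmq.comp hmZ) (hmh.comp hmW) hmD hD01
      hY hqZ hhW hEQY ?_ ?_ hbridgeh hbridgeq
    · intro n
      exact hZY (fun z => Stmt15Aux.clamp n (q z)) (Stmt15Aux.clamp n)
        ((Stmt15Aux.clamp_meas n).comp hmq) (Stmt15Aux.clamp_meas n)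
        ⟨n, fun x => Stmt15Aux.clamp_bound n _⟩ ⟨n, fun x => Stmt15Aux.clamp_bound n _⟩
    · intro n
      exact hWD (fun x => Stmt15Aux.clamp n (h x))
        ((Stmt15Aux.clamp_meas n).comp hmh) ⟨n, fun x => Stmt15Aux.clamp_bound n _⟩
  have hIntDhW : Integrable (fun ω => D ω * h (W ω)) μ :=
    hhW.abs.mono' (hmD.mul (hmh.comp hmW)).aestronglyMeasurable
      (ae_of_all _ fun ω => by
        rw [Real.norm_eq_abs, abs_mul]
        refine mul_le_of_le_one_left (abs_nonneg _) ?_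
        rcases hD01 ω with h' | h' <;> simp [h'])
  have hsub : ∫ ω, D ω * (Y ω - h (W ω)) ∂μ
      = ∫ ω, D ω * Y ω ∂μ - ∫ ω, D ω * h (W ω) ∂μ := by
    have heq : (fun ω => D ω * (Y ω - h (W ω)))
        = fun ω => D ω * Y ω - D ω * h (W ω) := funext fun ω => mul_sub _ _ _
    rw [heq, integral_sub hDY hIntDhW]
  have hkey' : ∫ ω, D ω * h (W ω) ∂μ = ∫ ω, (1 - D ω) * q (Z ω) * Y ω ∂μ := by
    rw [key]
    refine integral_congr_ae (ae_of_all _ fun ω => ?_)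
    show (if D ω = 0 then (1 : ℝ) else 0) * (q (Z ω) * Y ω) = (1 - D ω) * q (Z ω) * Y ω
    rw [he0 ω]; ring
  rw [hsub, hkey', sub_div]
end
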